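/- Let $u \in (0,1)$. Define $D \subseteq [0,1]$ to be the set of numbers of the form $y = \sum_{l=1}^m u^{n_l}(1-u)^{l-1}$ where $m \in \mathbb{N}$, $n_1 \le n_2 \le \cdots \le n_{m-1}$ with $n_l \in \mathbb{N} \cup \{\infty\}$ for $l < m$, and $n_m \in \mathbb{Z}_{\ge 0} \cup \{\infty\}$ with $n_{m-1} \le n_m + 1$ (interpreting $u^\infty = 0$; for $m=1$ only $n_1 \in \mathbb{Z}_{\ge 0}\cup\{\infty\}$ is required). Then $D$ is dense in $[0,1]$. -/

import Mathlib

open Set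

/-- `u ^ n` for an extended natural exponent, with `u ^ ∞ = 0`. -/
noncomputable def upow (u : ℝ) : ℕ∞ → ℝ
  | ⊤ => 0
  | (k : ℕ) => u ^ k

/-- The set `D` of admissible sums `∑_{l=1}^m u^{n_l} (1-u)^{l-1}`. -/
def admissibleSet (u : ℝ) : Set ℝ :=
  {y | ∃ (m : ℕ) (_ : 1 ≤ m) (n : Fin m → ℕ∞),
    (∀ i : Fin m, (i : ℕ) + 1 < m → 1 ≤ n i) ∧
    (∀ i j : Fin m, i ≤ j → (j : ℕ) + 1 < m → n i ≤ n j) ∧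
    (∀ i j : Fin m, (i : ℕ) + 2 = m → (j : ℕ) + 1 = m → n i ≤ n j + 1) ∧
    y = ∑ l : Fin m, upow u (n l) * (1 - u) ^ (l : ℕ)}

lemma upow_coe (u : ℝ) (k : ℕ) : upow u (k : ℕ∞) = u ^ k := rfl

lemma mem_admissible (u : ℝ) (k : ℕ) (n : Fin (k+1) → ℕ) (hmono : Monotone n)
    (h1 : ∀ i, 1 ≤ n i) :
    (∑ l : Fin (k+1), u ^ (n l) * (1-u) ^ (l:ℕ)) ∈ admissibleSet u := by
  refine ⟨k+1, le_add_self, fun i => (n i : ℕ∞), ?_, ?_, ?_, ?_⟩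
  · intro i _
    show (1:ℕ∞) ≤ ((n i : ℕ) : ℕ∞)
    exact_mod_cast h1 i
  · intro i j hij _
    show ((n i : ℕ) : ℕ∞) ≤ ((n j : ℕ) : ℕ∞)
    exact_mod_cast hmono hij
  · intro i j hi hj
    have : (i : ℕ) ≤ (j : ℕ) := by omega
    have hij : i ≤ j := this
    calc ((n i:ℕ) : ℕ∞) ≤ ((n j:ℕ) : ℕ∞) := by exact_mod_cast hmono hij
      _ ≤ (n j : ℕ∞) + 1 := le_self_add
  · simp [upow_coe]

lemma greedy (u : ℝ) (hu0 : 0 < u) (hu1 : u < 1) {x : ℝ} {s : ℕ}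
    (hx : 0 < x) (hxs : x < u ^ s) :
    ∃ N : ℕ, s + 1 ≤ N ∧ u ^ N ≤ x ∧ x < u ^ (N - 1) := by
  have hex : ∃ n : ℕ, u ^ n ≤ x := by
    obtain ⟨n, hn⟩ := exists_pow_lt_of_lt_one hx hu1
    exact ⟨n, hn.le⟩
  set N := Nat.find hex with hN
  have hNle : u ^ N ≤ x := Nat.find_spec hex
  have hsN : s + 1 ≤ N := by
    by_contra h
    push_neg at h
    have : u ^ N ≥ u ^ s := pow_le_pow_of_le_one hu0.le hu1.le (by omega)
    linarith
  refine ⟨N, hsN, hNle, ?_⟩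
  have := Nat.find_min hex (m := N - 1) (by omega)
  push_neg at this
  exact this

lemma key (u : ℝ) (hu0 : 0 < u) (hu1 : u < 1) :
    ∀ m s : ℕ, ∀ x : ℝ, 0 < x → x < u ^ s →
    ∃ (k : ℕ) (n : Fin (k+1) → ℕ), Monotone n ∧ s + 1 ≤ n 0 ∧
      0 ≤ x - (∑ l : Fin (k+1), u ^ (n l) * (1-u) ^ (l:ℕ)) ∧
      x - (∑ l : Fin (k+1), u ^ (n l) * (1-u) ^ (l:ℕ)) ≤ (1-u)^(m+1) * u ^ s := by
  have hu1' : (0:ℝ) < 1 - u := by linarith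
  intro m
  induction m with
  | zero =>
    intro s x hx hxs
    obtain ⟨N, hsN, hNle, hNlt⟩ := greedy u hu0 hu1 hx hxs
    refine ⟨0, fun _ => N, monotone_const, hsN, ?_, ?_⟩
    all_goals {
      have hs1 : (∑ l : Fin (0+1), u ^ ((fun _ => N : Fin (0+1) → ℕ) l) * (1-u) ^ (l:ℕ)) = u ^ N := by
        simp [Fin.sum_univ_succ]
      rw [hs1]
      have h1 : u ^ N = u * u ^ (N-1) := by
        rw [← pow_succ']; congr 1; omega
      have h2 : u ^ (N-1) ≤ u ^ s := pow_le_pow_of_le_one hu0.le hu1.le (by omega)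
      first
      | linarith
      | (calc x - u ^ N ≤ (1-u) * u ^ (N-1) := by nlinarith [hNlt]
          _ ≤ (1-u)^(0+1) * u ^ s := by
              have hp : (1-u:ℝ)^(0+1) = 1-u := pow_one _
              rw [hp]
              exact mul_le_mul_of_nonneg_left h2 hu1'.le)
    }
  | succ m ih =>
    intro s x hx hxs
    obtain ⟨N, hsN, hNle, hNlt⟩ := greedy u hu0 hu1 hx hxs
    have hbound : (0:ℝ) ≤ (1-u)^(m+1+1) * u ^ s :=
      mul_nonneg (pow_nonneg hu1'.le _) (pow_nonneg hu0.le _)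
    rcases eq_or_lt_of_le hNle with heq | hlt
    · -- exact representation
      refine ⟨0, fun _ => N, monotone_const, hsN, ?_, ?_⟩
      all_goals
        have hs1 : (∑ l : Fin (0+1), u ^ ((fun _ => N : Fin (0+1) → ℕ) l) * (1-u) ^ (l:ℕ)) = u ^ N := by
          simp [Fin.sum_univ_succ]
      all_goals rw [hs1, ← heq, sub_self]
      exact hbound
    · -- recurse
      set x' := (x - u ^ N) / (1 - u) with hx'def
      have hx'pos : 0 < x' := div_pos (by linarith) hu1'
      have hxN : u ^ N = u * u ^ (N-1) := by
        rw [← pow_succ']; congr 1; omega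
      have hx'lt : x' < u ^ (N - 1) := by
        rw [div_lt_iff₀ hu1']
        nlinarith [hNlt]
      obtain ⟨k, n', hmono', hn'0, hge, hle⟩ := ih (N-1) x' hx'pos hx'lt
      have hNn'0 : N ≤ n' 0 := by omega
      refine ⟨k+1, Fin.cons N n', ?_, ?_, ?_, ?_⟩
      · intro a b hab
        rcases Fin.eq_zero_or_eq_succ a with rfl | ⟨i, rfl⟩
        · rcases Fin.eq_zero_or_eq_succ b with rfl | ⟨j, rfl⟩
          · exact le_refl _
          · simp only [Fin.cons_zero, Fin.cons_succ]
            exact hNn'0.trans (hmono' (Fin.zero_le j))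
        · rcases Fin.eq_zero_or_eq_succ b with rfl | ⟨j, rfl⟩
          · exact absurd hab (by simp [Fin.le_def])
          · simp only [Fin.cons_succ]
            exact hmono' (Fin.succ_le_succ_iff.mp hab)
      · simpa using hsN
      all_goals {
        have hsum : (∑ l : Fin (k+2), u ^ ((Fin.cons N n' : Fin (k+2) → ℕ) l) * (1-u) ^ (l:ℕ))
            = u ^ N + (1-u) * ∑ l : Fin (k+1), u ^ (n' l) * (1-u) ^ (l:ℕ) := by
          rw [Fin.sum_univ_succ]
          simp only [Fin.cons_zero, Fin.cons_succ, Fin.val_succ, Fin.val_zero, pow_zero, mul_one]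
          rw [Finset.mul_sum]
          congr 1
          apply Finset.sum_congr rfl
          intro l _
          ring
        rw [hsum]
        have hxr : x = u ^ N + (1-u) * x' := by
          rw [hx'def]
          field_simp
          ring
        first
        | nlinarith [hge, hu1'.le]
        | (have h2 : u ^ (N-1) ≤ u ^ s := pow_le_pow_of_le_one hu0.le hu1.le (by omega)
           have hpw : (0:ℝ) ≤ (1-u)^(m+1) := pow_nonneg hu1'.le _
           have : x - (u ^ N + (1-u) * ∑ l : Fin (k+1), u ^ (n' l) * (1-u) ^ (l:ℕ))
               = (1-u) * (x' - ∑ l : Fin (k+1), u ^ (n' l) * (1-u) ^ (l:ℕ)) := by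
             rw [hxr]; ring
           rw [this]
           calc (1-u) * (x' - ∑ l : Fin (k+1), u ^ (n' l) * (1-u) ^ (l:ℕ))
               ≤ (1-u) * ((1-u)^(m+1) * u ^ (N-1)) := mul_le_mul_of_nonneg_left hle hu1'.le
             _ ≤ (1-u) * ((1-u)^(m+1) * u ^ s) := by
                 apply mul_le_mul_of_nonneg_left _ hu1'.le
                 exact mul_le_mul_of_nonneg_left h2 hpw
             _ = (1-u)^(m+1+1) * u ^ s := by ring)
      }

/-- for `u ∈ (0,1)` the set `D` is dense in `[0,1]`. -/
theorem stmt9 (u : ℝ) (hu : u ∈ Set.Ioo (0:ℝ) 1) :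
    Set.Icc (0:ℝ) 1 ⊆ closure (admissibleSet u) := by
  obtain ⟨hu0, hu1⟩ := hu
  have hu1' : (0:ℝ) < 1 - u := by linarith
  have hIoo : Set.Ioo (0:ℝ) 1 ⊆ closure (admissibleSet u) := by
    intro x hx
    rw [Metric.mem_closure_iff]
    intro ε hε
    obtain ⟨M, hM⟩ := exists_pow_lt_of_lt_one hε (by linarith : 1 - u < 1)
    have hx1 : x < u ^ 0 := by simpa using hx.2
    obtain ⟨k, n, hmono, hn0, hge, hle⟩ := key u hu0 hu1 M 0 x hx.1 hx1
    refine ⟨∑ l : Fin (k+1), u ^ (n l) * (1-u) ^ (l:ℕ), ?_, ?_⟩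
    · exact mem_admissible u k n hmono (fun i => le_trans (by omega) (hmono (Fin.zero_le i)))
    · rw [Real.dist_eq, abs_of_nonneg hge]
      have h1 : (1-u)^(M+1) ≤ (1-u)^M :=
        pow_le_pow_of_le_one hu1'.le (by linarith) (by omega)
      simp only [pow_zero, mul_one] at hle
      linarith
  calc Set.Icc (0:ℝ) 1 = closure (Set.Ioo (0:ℝ) 1) := (closure_Ioo one_ne_zero.symm).symm
    _ ⊆ closure (closure (admissibleSet u)) := closure_mono hIoo
    _ = closure (admissibleSet u) := closure_closure
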